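/- The function r ↦ (r/(r−1))^r is decreasing on (1, ∞): for all real numbers r, s with 1 < r ≤ s, one has (s/(s−1))^s ≤ (r/(r−1))^r. -/

import Mathlib

private lemma doob_aux_hasDeriv (x : ℝ) (hx : 1 < x) :
    HasDerivAt (fun y : ℝ => y * (Real.log y - Real.log (y - 1)))
      (1 * (Real.log x - Real.log (x - 1)) + x * (x⁻¹ - (x - 1)⁻¹ * 1)) x := by
  have hx0 : x ≠ 0 := by linarith
  have hx1 : x - 1 ≠ 0 := by linarith
  have h1 : HasDerivAt Real.log x⁻¹ x := Real.hasDerivAt_log hx0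
  have h2 : HasDerivAt (fun y : ℝ => Real.log (y - 1)) ((x - 1)⁻¹ * 1) x :=
    by have := (Real.hasDerivAt_log hx1).comp x ((hasDerivAt_id x).sub_const 1); exact this
  exact (hasDerivAt_id x).mul (h1.sub h2)

private lemma doob_aux_deriv_neg (x : ℝ) (hx : 1 < x) :
    1 * (Real.log x - Real.log (x - 1)) + x * (x⁻¹ - (x - 1)⁻¹ * 1) < 0 := by
  have hx0 : (0:ℝ) < x := by linarith
  have hx1 : (0:ℝ) < x - 1 := by linarith
  have hq : Real.log x - Real.log (x - 1) = Real.log (x / (x - 1)) :=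
    (Real.log_div (ne_of_gt hx0) (ne_of_gt hx1)).symm
  have hpos : 0 < x / (x - 1) := div_pos hx0 hx1
  have hne : x / (x - 1) ≠ 1 := by
    intro h
    have : x = x - 1 := by field_simp at h; linarith
    linarith
  have hlog : Real.log (x / (x - 1)) < x / (x - 1) - 1 :=
    Real.log_lt_sub_one_of_pos hpos hne
  have hrest : x * (x⁻¹ - (x - 1)⁻¹ * 1) = 1 - x / (x - 1) := by
    field_simp
  rw [hq, hrest]
  linarith

private lemma doob_aux_anti : StrictAntiOn
    (fun y : ℝ => y * (Real.log y - Real.log (y - 1))) (Set.Ioi 1) := by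
  apply strictAntiOn_of_deriv_neg (convex_Ioi 1)
  · intro x hx
    exact ((doob_aux_hasDeriv x hx).continuousAt).continuousWithinAt
  · intro x hx
    rw [interior_Ioi] at hx
    rw [(doob_aux_hasDeriv x hx).deriv]
    exact doob_aux_deriv_neg x hx

/-- **Monotonicity of the Doob constant.** The function `r ↦ (r/(r−1))^r` is
decreasing on `(1, ∞)`: for `1 < r ≤ s` one has `(s/(s−1))^s ≤ (r/(r−1))^r`. -/
theorem doob_constant_antitone (r s : ℝ) (hr : 1 < r) (hrs : r ≤ s) :
    (s / (s - 1)) ^ s ≤ (r / (r - 1)) ^ r := by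
  have hs : 1 < s := lt_of_lt_of_le hr hrs
  have hrepr : ∀ x : ℝ, 1 < x →
      (x / (x - 1)) ^ x = Real.exp (x * (Real.log x - Real.log (x - 1))) := by
    intro x hx
    have hx0 : (0:ℝ) < x := by linarith
    have hx1 : (0:ℝ) < x - 1 := by linarith
    rw [Real.rpow_def_of_pos (div_pos hx0 hx1),
      Real.log_div (ne_of_gt hx0) (ne_of_gt hx1), mul_comm]
  rw [hrepr r hr, hrepr s hs]
  apply Real.exp_le_exp.mpr
  rcases eq_or_lt_of_le hrs with h | h
  · subst h; exact le_rfl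
  · exact le_of_lt (doob_aux_anti hr hs h)
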